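/- Let S be an F2-linear subspace of F2^n × F2^n of dimension n − k on which the symplectic product vanishes identically (the stabilizer of an [[n, k]] stabilizer code, modulo phases). Then there exist a basis m_1, …, m_{n−k} of S and vectors e_1, …, e_{n−k} ∈ F2^n × F2^n, each of weight wt(e_j) = 1 (single-qubit Pauli errors), such that ⟨m_i, e_j⟩ = 1 if i = j and ⟨m_i, e_j⟩ = 0 if i ≠ j. -/

import Mathlib

open Finset

abbrev F2 := ZMod 2

abbrev Pauli (n : ℕ) := (Fin n → F2) × (Fin n → F2)

/-- Hamming weight of a vector over `F2`. -/
def vwt {ι : Type*} [Fintype ι] (v : ι → F2) : ℕ :=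
  (Finset.univ.filter fun i => v i ≠ 0).card

/-- Weight of a Pauli operator: number of qubits on which it acts nontrivially. -/
def pwt {n : ℕ} (e : Pauli n) : ℕ :=
  (Finset.univ.filter fun i => e.1 i ≠ 0 ∨ e.2 i ≠ 0).card

/-- Symplectic product of two Pauli operators. -/
def symp {n : ℕ} (e e' : Pauli n) : F2 :=
  (∑ i, e.1 i * e'.2 i) + (∑ i, e.2 i * e'.1 i)

/-- Syndrome map of a check set. -/
def synd {n r : ℕ} (m : Fin r → Pauli n) (e : Pauli n) : Fin r → F2 :=
  fun i => symp (m i) e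

/-- Stabilizer span of a check set. -/
def stab {n r : ℕ} (m : Fin r → Pauli n) : Submodule F2 (Pauli n) :=
  Submodule.span F2 (Set.range m)

/-- Minimum weight of a Pauli modulo the stabilizer span. -/
noncomputable def wtmin {n r : ℕ} (m : Fin r → Pauli n) (e : Pauli n) : ℕ :=
  sInf {w | ∃ s ∈ stab m, w = pwt (e + s)}

/-- `(t, f)`-soundness of a check set. -/
def IsSound {n r : ℕ} (m : Fin r → Pauli n) (t : ℕ) (f : ℕ → ℝ) : Prop :=
  ∀ e : Pauli n, vwt (synd m e) < t →
    ∃ e' : Pauli n, synd m e' = synd m e ∧ (pwt e' : ℝ) ≤ f (vwt (synd m e))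

/-- symp as a linear map in the first argument. -/
def sympL {n : ℕ} (e : Pauli n) : Pauli n →ₗ[F2] F2 where
  toFun s := symp s e
  map_add' a b := by
    simp [symp, add_mul, Finset.sum_add_distrib]; ring
  map_smul' c a := by
    simp [symp, Finset.mul_sum, mul_add, mul_assoc]

lemma pwt_singleX {n : ℕ} (i : Fin n) : pwt ((Pi.single i 1, 0) : Pauli n) = 1 := by
  unfold pwt
  have : (Finset.univ.filter fun j =>
      (((Pi.single i 1, 0) : Pauli n).1 j ≠ 0 ∨ ((Pi.single i 1, 0) : Pauli n).2 j ≠ 0)) = {i} := by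
    ext j
    by_cases h : j = i <;> simp [Pi.single_apply, h]
  rw [this, Finset.card_singleton]

lemma pwt_singleZ {n : ℕ} (i : Fin n) : pwt ((0, Pi.single i 1) : Pauli n) = 1 := by
  unfold pwt
  have : (Finset.univ.filter fun j =>
      (((0, Pi.single i 1) : Pauli n).1 j ≠ 0 ∨ ((0, Pi.single i 1) : Pauli n).2 j ≠ 0)) = {i} := by
    ext j
    by_cases h : j = i <;> simp [Pi.single_apply, h]
  rw [this, Finset.card_singleton]

lemma symp_singleZ {n : ℕ} (s : Pauli n) (i : Fin n) :
    symp s ((0, Pi.single i 1) : Pauli n) = s.1 i := by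
  simp [symp, Pi.single_apply, mul_ite, Finset.sum_ite_eq']

lemma symp_singleX {n : ℕ} (s : Pauli n) (i : Fin n) :
    symp s ((Pi.single i 1, 0) : Pauli n) = s.2 i := by
  simp [symp, Pi.single_apply, mul_ite, Finset.sum_ite_eq']

/-- Lemma 5: for any stabilizer group there is a minimal generating set
together with single-qubit pure errors, each anticommuting with exactly one generator. -/
theorem pure_errors_exist
    (n k : ℕ) (hk : k ≤ n)
    (S : Submodule F2 (Pauli n))
    (hdim : Module.finrank F2 S = n - k)
    (hiso : ∀ a ∈ S, ∀ b ∈ S, symp a b = 0) :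
    ∃ (m e : Fin (n - k) → Pauli n),
      LinearIndependent F2 m ∧
      Submodule.span F2 (Set.range m) = S ∧
      (∀ j, pwt (e j) = 1) ∧
      (∀ i j, symp (m i) (e j) = if i = j then 1 else 0) := by
  classical
  haveI : Module.IsReflexive F2 (↥S) := Module.IsReflexive.of_finite_of_free F2 ↥S
  set r := n - k with hr
  have hfinD : Module.finrank F2 (Module.Dual F2 S) = r := by
    rw [Subspace.dual_finrank_eq, hdim]
  set T : Pauli n → Module.Dual F2 S := fun e => (sympL e).domRestrict S with hT
  set t : Set (Module.Dual F2 S) := T '' {e | pwt e = 1} with ht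
  -- Step A: t spans the dual
  have hspan : Submodule.span F2 t = ⊤ := by
    set W := Submodule.span F2 t with hW
    have hco : W.dualCoannihilator = ⊥ := by
      rw [Submodule.eq_bot_iff]
      intro s hs
      rw [Submodule.mem_dualCoannihilator] at hs
      have key : ∀ e : Pauli n, pwt e = 1 → symp (s : Pauli n) e = 0 := by
        intro e he
        exact hs _ (Submodule.subset_span ⟨e, he, rfl⟩)
      have hx : (s : Pauli n).1 = 0 := by
        funext i
        have := key _ (pwt_singleZ (n := n) i)
        rwa [symp_singleZ] at this
      have hz : (s : Pauli n).2 = 0 := by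
        funext i
        have := key _ (pwt_singleX (n := n) i)
        rwa [symp_singleX] at this
      exact Subtype.ext (Prod.ext hx hz)
    have h := Subspace.finrank_add_finrank_dualCoannihilator_eq W
    rw [hco, finrank_bot, Nat.add_zero] at h
    exact Submodule.eq_top_of_finrank_eq (h.trans (Subspace.dual_finrank_eq (V := ↥S)).symm)
  -- Step B: extract a basis inside t
  obtain ⟨b, hbt, hspanb, hlib⟩ := exists_linearIndependent F2 t
  rw [hspan] at hspanb
  let hbasis : Module.Basis b F2 (Module.Dual F2 S) :=
    Module.Basis.mk hlib (by rw [Subtype.range_coe, hspanb])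
  haveI : Fintype b := FiniteDimensional.fintypeBasisIndex hbasis
  have hcard : Fintype.card b = r := by
    rw [← hfinD, Module.finrank_eq_card_basis hbasis]
  let eb : Fin r ≃ b := (Fintype.equivFinOfCardEq hcard).symm
  let f : Module.Basis (Fin r) F2 (Module.Dual F2 S) := hbasis.reindex eb.symm
  have hf : ∀ i, f i ∈ t := by
    intro i
    have h1 : f i = hbasis (eb i) := by simp [f, Module.Basis.reindex_apply]
    have h2 : hbasis (eb i) = ((eb i : Module.Dual F2 S)) := by
      simp [hbasis, Module.Basis.mk_apply]
    rw [h1, h2]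
    exact hbt (eb i).2
  choose err herr1 herr2 using fun i => hf i
  -- Step C: dual basis of f pulled back to S
  let mb : Module.Basis (Fin r) F2 S := f.dualBasis.map (Module.evalEquiv F2 S).symm
  refine ⟨fun i => (mb i : Pauli n), err, ?_, ?_, herr1, ?_⟩
  · have h : (fun i => (mb i : Pauli n)) = S.subtype ∘ mb := rfl
    rw [h]
    exact mb.linearIndependent.map' S.subtype (Submodule.ker_subtype S)
  · have h : Set.range (fun i => (mb i : Pauli n)) = S.subtype '' Set.range mb := by
      rw [← Set.range_comp]; rfl
    rw [h, Submodule.span_image, mb.span_eq, Submodule.map_top, Submodule.range_subtype]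
  · intro i j
    have h1 : symp ((mb i : S) : Pauli n) (err j) = (T (err j)) (mb i) := rfl
    have h2 : (f j) (mb i) = (f.dualBasis i) (f j) := by
      simp [mb, Module.Basis.map_apply, Module.apply_evalEquiv_symm_apply, Module.Dual.eval_apply]
    rw [h1, herr2 j, h2, Module.Basis.dualBasis_apply_self]
    rcases eq_or_ne i j with h | h
    · simp [h]
    · simp [h, Ne.symm h]
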